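/- arXiv:2210.15076 — 7 statements merged into one kernel-verified Lean document; each statement's English description precedes it below -/
import Mathlib

section
/- For all integers n, s, k with n ≥ 2s+1 and k ≥ 2, the graph G(n,k,s) (the complete k-partite graph on n vertices with k−1 classes of total size s whose sizes are as equal as possible and one class of size n−s) contains no clique on k+1 vertices, has matching number at most s, and has exactly g(n,k,s) edges. -/
/-- `t(n,k)`: the number of edges of the Turán graph `T(n,k)`. -/
noncomputable def turanNum (n k : ℕ) : ℕ := ((SimpleGraph.turanGraph n k).edgeSet).ncard

/-- The graph `G(n,k,s)`: the complete `k`-partite graph on `n` vertices consisting of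
`k-1` classes of total size `s` whose sizes are as equal as possible (vertices `i < s`,
grouped by residue mod `k-1`), and one additional class of size `n-s` (vertices `i ≥ s`). -/
def gGraph (n k s : ℕ) : SimpleGraph (Fin n) where
  Adj i j := ((i : ℕ) < s ∧ (j : ℕ) < s ∧ (i : ℕ) % (k-1) ≠ (j : ℕ) % (k-1)) ∨
    ((i : ℕ) < s ∧ s ≤ (j : ℕ)) ∨ (s ≤ (i : ℕ) ∧ (j : ℕ) < s)
  symm := by
    constructor
    rintro i j (⟨h1, h2, h3⟩ | ⟨h1, h2⟩ | ⟨h1, h2⟩)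
    · exact Or.inl ⟨h2, h1, h3.symm⟩
    · exact Or.inr (Or.inr ⟨h2, h1⟩)
    · exact Or.inr (Or.inl ⟨h2, h1⟩)
  loopless := by
    constructor
    rintro i (⟨h1, h2, h3⟩ | ⟨h1, h2⟩ | ⟨h1, h2⟩)
    · exact h3 rfl
    · omega
    · omega

/-- `g(n,k,s)`: the number of edges of the graph `G(n,k,s)`. -/
noncomputable def gNum (n k s : ℕ) : ℕ := (gGraph n k s).edgeSet.ncard

/-- The matching number of `G` is at most `s`: every matching of `G` has at most `s` edges. -/
def MatchingNumberLE {V : Type*} (G : SimpleGraph V) (s : ℕ) : Prop :=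
  ∀ M : G.Subgraph, M.IsMatching → M.edgeSet.ncard ≤ s

/-- For all integers `n, s, k` with `n ≥ 2s+1` and `k ≥ 2`, the graph `G(n,k,s)` contains no
clique on `k+1` vertices, has matching number at most `s`, and has exactly `g(n,k,s)` edges. -/
theorem gGraph_properties (n s k : ℕ) (hn : 2 * s + 1 ≤ n) (hk : 2 ≤ k) :
    (gGraph n k s).CliqueFree (k + 1) ∧ MatchingNumberLE (gGraph n k s) s ∧
      (gGraph n k s).edgeSet.ncard = gNum n k s := by
  refine ⟨?_, ?_, rfl⟩
  · -- clique free
    intro t ht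
    have hcard : t.card = k + 1 := ht.card_eq
    set f : Fin n → ℕ := fun v => if (v : ℕ) < s then (v : ℕ) % (k - 1) else k - 1 with hf
    have hmaps : ∀ v ∈ t, f v ∈ Finset.range k := by
      intro v _
      simp only [hf, Finset.mem_range]
      split <;> [exact lt_of_lt_of_le (Nat.mod_lt _ (by omega)) (by omega); omega]
    have hinj : Set.InjOn f ↑t := by
      intro u hu v hv hfuv
      by_contra hne
      have hadj := ht.1 hu hv hne
      simp only [hf] at hfuv
      have hmu := Nat.mod_lt (u : ℕ) (show 0 < k - 1 by omega)
      have hmv := Nat.mod_lt (v : ℕ) (show 0 < k - 1 by omega)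
      rcases hadj with ⟨h1, h2, h3⟩ | ⟨h1, h2⟩ | ⟨h1, h2⟩ <;>
        split_ifs at hfuv <;> omega
    have := Finset.card_le_card_of_injOn f hmaps hinj
    simp [hcard] at this
  · -- matching number
    intro M hM
    classical
    have hpick : ∀ e ∈ M.edgeSet, ∃ v : Fin n, v ∈ e ∧ (v : ℕ) < s := by
      intro e he
      induction e using Sym2.ind with
      | _ a b =>
        rw [SimpleGraph.Subgraph.mem_edgeSet] at he
        have hadj := M.adj_sub he
        rcases hadj with ⟨h1, _, _⟩ | ⟨h1, _⟩ | ⟨_, h2⟩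
        · exact ⟨a, Sym2.mem_mk_left a b, h1⟩
        · exact ⟨a, Sym2.mem_mk_left a b, h1⟩
        · exact ⟨b, Sym2.mem_mk_right a b, h2⟩
    set g : Sym2 (Fin n) → Fin n := fun e =>
      if h : ∃ v : Fin n, v ∈ e ∧ (v : ℕ) < s then h.choose else (⟨0, by omega⟩ : Fin n)
    have hg_mem : ∀ e ∈ M.edgeSet, g e ∈ e ∧ ((g e : ℕ)) < s := by
      intro e he
      have h := hpick e he
      simp only [g, dif_pos h]
      exact h.choose_spec
    have hmaps : ∀ e ∈ M.edgeSet, g e ∈ {v : Fin n | (v : ℕ) < s} := fun e he =>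
      (hg_mem e he).2
    have hinj : Set.InjOn g M.edgeSet := by
      intro e1 he1 e2 he2 hge
      obtain ⟨hm1, _⟩ := hg_mem e1 he1
      obtain ⟨hm2, _⟩ := hg_mem e2 he2
      rw [hge] at hm1
      obtain ⟨w1, h1⟩ := Sym2.mem_iff_exists.mp hm1
      obtain ⟨w2, h2⟩ := Sym2.mem_iff_exists.mp hm2
      rw [h1] at he1
      rw [h2] at he2
      rw [SimpleGraph.Subgraph.mem_edgeSet] at he1 he2
      rw [h2, h1, (hM (M.edge_vert he1)).unique he1 he2]
    have hfin : ({v : Fin n | (v : ℕ) < s}).Finite := Set.finite_univ.subset (Set.subset_univ _)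
    have hle := Set.ncard_le_ncard_of_injOn g hmaps hinj hfin
    have hcard : ({v : Fin n | (v : ℕ) < s}).ncard ≤ s := by
      have : ({v : Fin n | (v : ℕ) < s}).ncard ≤ (Set.Iio s).ncard :=
        Set.ncard_le_ncard_of_injOn (fun v => (v : ℕ)) (fun v hv => hv)
          (fun u _ v _ h => Fin.ext h)
          (by rw [← Finset.coe_Iio]; exact (Finset.Iio s).finite_toSet)
      rwa [← Finset.coe_Iio, Set.ncard_coe_finset, Nat.card_Iio] at this
    omega
end

section
/- Fix integers k ≥ 2, s ≥ 1 and n ≥ 2s+1, and define f(b) = t(2s−b+1, k) + b·(n−2s+b−1) for integers 0 ≤ b ≤ s. Then f is discretely convex on this range, i.e. f(b+2) − f(b+1) ≥ f(b+1) − f(b) for all b with 0 ≤ b ≤ s−2. -/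
open Finset

private lemma countRes (n k : ℕ) (hk : 1 ≤ k) :
    ((range n).filter (fun j => j % k = n % k)).card = n / k := by
  have : (range n).filter (fun j => j % k = n % k)
      = (range (n / k)).image (fun t => n % k + t * k) := by
    ext j
    simp only [mem_filter, mem_range, mem_image]
    have hn := Nat.div_add_mod n k
    constructor
    · rintro ⟨hj, hmod⟩
      have hjj := Nat.div_add_mod j k
      refine ⟨j / k, ?_, ?_⟩
      · by_contra h
        push_neg at h
        have h2 : k * (n / k) ≤ k * (j / k) := Nat.mul_le_mul_left k h
        omega
      · have : k * (j / k) = j / k * k := Nat.mul_comm _ _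
        omega
    · rintro ⟨t, ht, rfl⟩
      have hlt : t * k < (n / k) * k := (Nat.mul_lt_mul_right hk).2 ht
      have h1 : k * (n / k) = (n / k) * k := Nat.mul_comm _ _
      refine ⟨by omega, ?_⟩
      rw [Nat.add_mul_mod_self_right]
      exact Nat.mod_mod_of_dvd _ dvd_rfl
  rw [this, Finset.card_image_of_injective _ (fun a b h => by
    have : a * k = b * k := by omega
    exact Nat.eq_of_mul_eq_mul_right hk this), Finset.card_range]

private def Acount (n k : ℕ) : ℕ :=
  ∑ i ∈ range n, ((range n).filter (fun j => j % k = i % k)).card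

private lemma finCount_eq (n k r : ℕ) :
    ((Finset.univ : Finset (Fin n)).filter (fun j : Fin n => (j : ℕ) % k = r)).card
      = ((range n).filter (fun j : ℕ => j % k = r)).card := by
  rw [Finset.card_filter, Finset.card_filter]
  exact Fin.sum_univ_eq_sum_range (fun j : ℕ => if j % k = r then 1 else 0) n

private lemma two_mul_turan (n k : ℕ) :
    2 * turanNum n k + Acount n k = n * n := by
  have h1 : turanNum n k = (SimpleGraph.turanGraph n k).edgeFinset.card := by
    rw [turanNum, ← SimpleGraph.coe_edgeFinset, Set.ncard_coe_finset]
  have h2 := SimpleGraph.sum_degrees_eq_twice_card_edges (SimpleGraph.turanGraph n k)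
  have h3 : ∀ v : Fin n, (SimpleGraph.turanGraph n k).degree v
      + ((range n).filter (fun j => j % k = (v : ℕ) % k)).card = n := by
    intro v
    rw [← finCount_eq n k ((v : ℕ) % k)]
    rw [← SimpleGraph.card_neighborFinset_eq_degree, SimpleGraph.neighborFinset_eq_filter]
    have : ∀ j : Fin n, (SimpleGraph.turanGraph n k).Adj v j
        ↔ ¬ ((j : ℕ) % k = (v : ℕ) % k) := by
      intro j
      simp [SimpleGraph.turanGraph, ne_comm]
    rw [Finset.filter_congr (fun j _ => this j)]
    have hsplit := Finset.card_filter_add_card_filter_not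
      (s := (Finset.univ : Finset (Fin n))) (p := fun j : Fin n => (j : ℕ) % k = (v : ℕ) % k)
    simp only [Finset.card_univ, Fintype.card_fin] at hsplit
    omega
  have h4 : ∑ v : Fin n, ((SimpleGraph.turanGraph n k).degree v
      + ((range n).filter (fun j => j % k = (v : ℕ) % k)).card) = n * n := by
    rw [Finset.sum_congr rfl (fun v _ => h3 v)]
    simp [Finset.sum_const, mul_comm]
  rw [Finset.sum_add_distrib, h2] at h4
  have h5 : ∑ v : Fin n, ((range n).filter (fun j => j % k = (v : ℕ) % k)).card
      = Acount n k := by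
    rw [Acount]
    exact Fin.sum_univ_eq_sum_range
      (fun i : ℕ => ((range n).filter (fun j : ℕ => j % k = i % k)).card) n
  rw [h5] at h4
  omega

private lemma Acount_succ (n k : ℕ) (hk : 1 ≤ k) :
    Acount (n + 1) k = Acount n k + 2 * (n / k) + 1 := by
  unfold Acount
  rw [Finset.sum_range_succ]
  have hlast : ((range (n+1)).filter (fun j => j % k = n % k)).card = n / k + 1 := by
    rw [Finset.range_add_one, Finset.filter_insert, if_pos rfl,
      Finset.card_insert_of_notMem (by simp), countRes n k hk]
  rw [hlast]
  have hstep : ∀ i ∈ range n,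
      ((range (n+1)).filter (fun j => j % k = i % k)).card
        = ((range n).filter (fun j => j % k = i % k)).card
          + (if n % k = i % k then 1 else 0) := by
    intro i _
    rw [Finset.range_add_one, Finset.filter_insert]
    split_ifs with h
    · rw [Finset.card_insert_of_notMem (by simp)]
    · rfl
  rw [Finset.sum_congr rfl hstep, Finset.sum_add_distrib]
  have : (∑ i ∈ range n, if n % k = i % k then 1 else 0)
      = ((range n).filter (fun i => i % k = n % k)).card := by
    rw [Finset.card_filter]
    exact Finset.sum_congr rfl (fun i _ => by simp [eq_comm])
  rw [this, countRes n k hk]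
  ring

private lemma turan_succ (n k : ℕ) (hk : 1 ≤ k) :
    turanNum (n + 1) k = turanNum n k + (n - n / k) := by
  have e1 := two_mul_turan n k
  have e2 := two_mul_turan (n + 1) k
  have e3 := Acount_succ n k hk
  have hd : n / k ≤ n := Nat.div_le_self n k
  have hsq : (n + 1) * (n + 1) = n * n + 2 * n + 1 := by ring
  omega

private lemma turan_key (q k : ℕ) (hk : 1 ≤ k) :
    turanNum q k + turanNum (q + 2) k + 2 ≥ 2 * turanNum (q + 1) k := by
  have h1 := turan_succ q k hk
  have h2 : turanNum (q + 2) k = turanNum (q + 1) k + (q + 1 - (q + 1) / k) := turan_succ (q + 1) k hk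
  have hd1 : q / k ≤ q := Nat.div_le_self q k
  have hd2 : (q + 1) / k ≤ q + 1 := Nat.div_le_self _ k
  have hdd : (q + 1) / k ≤ q / k + 1 := by
    calc (q + 1) / k ≤ (q + k) / k := Nat.div_le_div_right (by omega)
    _ = q / k + 1 := Nat.add_div_right q hk
  omega

/-- Fix integers `k ≥ 2`, `s ≥ 1` and `n ≥ 2s+1`, and define
`f(b) = t(2s-b+1, k) + b·(n-2s+b-1)` for integers `0 ≤ b ≤ s`. Then `f` is discretely convex
on this range: `f(b+2) - f(b+1) ≥ f(b+1) - f(b)` for all `b` with `0 ≤ b ≤ s-2`. -/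
theorem f_discretely_convex (n s k : ℕ) (hk : 2 ≤ k) (hs : 1 ≤ s) (hn : 2 * s + 1 ≤ n)
    (f : ℕ → ℤ)
    (hf : ∀ b : ℕ, b ≤ s →
      f b = (turanNum (2 * s - b + 1) k : ℤ) + (b : ℤ) * ((n : ℤ) - 2 * s + b - 1)) :
    ∀ b : ℕ, b + 2 ≤ s → f (b + 1) - f b ≤ f (b + 2) - f (b + 1) := by
  intro b hb
  set q := 2 * s - b - 1 with hq
  have h0 : 2 * s - b + 1 = q + 2 := by omega
  have h1 : 2 * s - (b + 1) + 1 = q + 1 := by omega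
  have h2 : 2 * s - (b + 2) + 1 = q := by omega
  rw [hf b (by omega), hf (b + 1) (by omega), hf (b + 2) (by omega), h0, h1, h2]
  have key := turan_key q k (by omega)
  have keyZ : (turanNum q k : ℤ) + (turanNum (q + 2) k : ℤ) + 2
      ≥ 2 * (turanNum (q + 1) k : ℤ) := by exact_mod_cast key
  push_cast
  nlinarith [keyZ]
end

section
/- Every simple graph with matching number at most s has at most s vertices of degree exceeding 2s. -/
open scoped Classical in
lemma greedy_exists {V : Type*} [Fintype V] (G : SimpleGraph V) (s : ℕ)
    (S : Finset V) (hS : S.card ≤ s + 1)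
    (hdeg : ∀ v ∈ S, 2 * s < (G.neighborSet v).ncard) :
    ∀ T : Finset V, T ⊆ S →
    ∃ f : V → V, (∀ v ∈ T, G.Adj v (f v) ∧ f v ∉ S) ∧ Set.InjOn f ↑T := by
  intro T
  induction T using Finset.cons_induction with
  | empty => exact fun _ => ⟨id, by simp, by simp [Set.InjOn]⟩
  | cons a T' hanotin ih =>
    intro hT
    have haS : a ∈ S := hT (Finset.mem_cons_self a T')
    have hT'S : T' ⊆ S := fun x hx => hT (Finset.mem_cons_of_mem hx)
    obtain ⟨f, hf, hinj⟩ := ih hT'S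
    -- find a fresh neighbor b of a
    set N : Finset V := (G.neighborSet a).toFinset with hN
    have hNcard : 2 * s < N.card := by
      have := hdeg a haS
      rwa [Set.ncard_eq_toFinset_card'] at this
    have hT'card : T'.card + 1 ≤ s + 1 := by
      have := Finset.card_le_card hT
      rw [Finset.card_cons] at this
      omega
    set F : Finset V := (S ∪ T'.image f).erase a with hF
    have hFcard : F.card ≤ 2 * s := by
      have h1 : (S ∪ T'.image f).card ≤ S.card + T'.card :=
        le_trans (Finset.card_union_le _ _) (by
          have := Finset.card_image_le (f := f) (s := T'); omega)
      have h2 : a ∈ S ∪ T'.image f := Finset.mem_union_left _ haS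
      rw [hF, Finset.card_erase_of_mem h2]
      omega
    have haN : a ∉ N := by simp [hN]
    have hsub : N \ (S ∪ T'.image f) = N \ F := by
      ext x
      simp only [Finset.mem_sdiff, hF, Finset.mem_erase]
      constructor
      · rintro ⟨hx, hx2⟩; exact ⟨hx, fun h => hx2 h.2⟩
      · rintro ⟨hx, hx2⟩
        refine ⟨hx, fun h => hx2 ⟨fun he => haN (he ▸ hx), h⟩⟩
    have hne : (N \ (S ∪ T'.image f)).Nonempty := by
      rw [hsub, ← Finset.card_pos]
      have := Finset.le_card_sdiff F N
      have h3 : N.card - F.card ≤ (N \ F).card := Finset.le_card_sdiff F N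
      omega
    obtain ⟨b, hb⟩ := hne
    rw [Finset.mem_sdiff, Finset.mem_union] at hb
    obtain ⟨hbN, hbnot⟩ := hb
    push_neg at hbnot
    obtain ⟨hbS, hbim⟩ := hbnot
    have hbadj : G.Adj a b := by
      rw [hN] at hbN; simpa using hbN
    refine ⟨Function.update f a b, ?_, ?_⟩
    · intro v hv
      rcases Finset.mem_cons.mp hv with rfl | hv'
      · simp [Function.update_self, hbadj, hbS]
      · have hne' : v ≠ a := fun h => hanotin (h ▸ hv')
        rw [Function.update_of_ne hne']
        exact hf v hv'
    · intro x hx y hy hxy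
      simp only [Finset.coe_cons, Set.mem_insert_iff, Finset.mem_coe] at hx hy
      rcases hx with rfl | hx <;> rcases hy with rfl | hy
      · rfl
      · exfalso
        have hyne : y ≠ x := fun h => hanotin (h ▸ hy)
        rw [Function.update_self, Function.update_of_ne hyne] at hxy
        exact hbim (Finset.mem_image.mpr ⟨y, Finset.mem_coe.mp hy, hxy.symm⟩)
      · exfalso
        have hxne : x ≠ y := fun h => hanotin (h ▸ hx)
        rw [Function.update_self, Function.update_of_ne hxne] at hxy
        exact hbim (Finset.mem_image.mpr ⟨x, Finset.mem_coe.mp hx, hxy⟩)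
      · have hxne : x ≠ a := fun h => hanotin (h ▸ hx)
        have hyne : y ≠ a := fun h => hanotin (h ▸ hy)
        rw [Function.update_of_ne hxne, Function.update_of_ne hyne] at hxy
        exact hinj hx hy hxy

/-- Every simple graph with matching number at most `s` has at most `s` vertices of degree
exceeding `2s`. -/
theorem few_high_degree_vertices {V : Type*} [Fintype V] (G : SimpleGraph V) (s : ℕ)
    (hmatch : MatchingNumberLE G s) :
    {v : V | 2 * s < (G.neighborSet v).ncard}.ncard ≤ s := by
  classical
  by_contra hcon
  push_neg at hcon
  set H := {v : V | 2 * s < (G.neighborSet v).ncard} with hH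
  have hfin : H.Finite := Set.toFinite _
  have hcard : s + 1 ≤ hfin.toFinset.card := by
    rw [← Set.ncard_eq_toFinset_card]; omega
  obtain ⟨S, hSsub, hScard⟩ := Finset.exists_subset_card_eq hcard
  have hdeg : ∀ v ∈ S, 2 * s < (G.neighborSet v).ncard := by
    intro v hv
    have := hSsub hv
    rwa [Set.Finite.mem_toFinset] at this
  obtain ⟨f, hf, hinj⟩ := greedy_exists G s S hScard.le hdeg S (le_refl S)
  let M : G.Subgraph :=
  { verts := ↑S ∪ f '' ↑S
    Adj := fun x y => ∃ v ∈ S, (x = v ∧ y = f v) ∨ (y = v ∧ x = f v)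
    adj_sub := by
      rintro x y ⟨v, hv, ⟨rfl, rfl⟩ | ⟨rfl, rfl⟩⟩
      · exact (hf x hv).1
      · exact (hf y hv).1.symm
    edge_vert := by
      rintro x y ⟨v, hv, ⟨rfl, rfl⟩ | ⟨rfl, rfl⟩⟩
      · exact Or.inl (Finset.mem_coe.mpr hv)
      · exact Or.inr ⟨y, Finset.mem_coe.mpr hv, rfl⟩
    symm := by
      constructor
      rintro x y ⟨v, hv, h | h⟩
      exacts [⟨v, hv, Or.inr h⟩, ⟨v, hv, Or.inl h⟩] }
  have hM : M.IsMatching := by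
    rintro x (hx | ⟨u, hu, rfl⟩)
    · refine ⟨f x, ⟨x, Finset.mem_coe.mp hx, Or.inl ⟨rfl, rfl⟩⟩, ?_⟩
      rintro y ⟨v, hv, ⟨rfl, rfl⟩ | ⟨rfl, h2⟩⟩
      · rfl
      · exact absurd (Finset.mem_coe.mp hx) (by rw [h2]; exact (hf y hv).2)
    · have huS : u ∈ S := Finset.mem_coe.mp hu
      refine ⟨u, ⟨u, huS, Or.inr ⟨rfl, rfl⟩⟩, ?_⟩
      rintro y ⟨v, hv, ⟨h1, rfl⟩ | ⟨rfl, h2⟩⟩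
      · exact absurd hv (by rw [← h1]; exact (hf u huS).2)
      · exact hinj (Finset.mem_coe.mpr hv) hu h2.symm
  have hedge : M.edgeSet = (fun v => s(v, f v)) '' ↑S := by
    ext e
    induction e using Sym2.ind with
    | _ x y =>
      simp only [SimpleGraph.Subgraph.mem_edgeSet, Set.mem_image, Finset.mem_coe]
      constructor
      · rintro ⟨v, hv, ⟨rfl, rfl⟩ | ⟨rfl, rfl⟩⟩
        · exact ⟨x, hv, rfl⟩
        · exact ⟨y, hv, Sym2.eq_swap⟩
      · rintro ⟨v, hv, he⟩
        rw [Sym2.eq_iff] at he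
        rcases he with ⟨h1, h2⟩ | ⟨h1, h2⟩
        · exact ⟨v, hv, Or.inl ⟨h1.symm, h2.symm⟩⟩
        · exact ⟨v, hv, Or.inr ⟨h1.symm, h2.symm⟩⟩
  have hcount : M.edgeSet.ncard = s + 1 := by
    rw [hedge, Set.ncard_image_of_injOn, Set.ncard_coe_finset, hScard]
    intro x hx y hy hxy
    simp only [Sym2.eq_iff] at hxy
    rcases hxy with ⟨h1, _⟩ | ⟨h1, h2⟩
    · exact h1
    · exact absurd (Finset.mem_coe.mp hx)
        (by rw [h1]; exact (hf y (Finset.mem_coe.mp hy)).2)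
  have := hmatch M hM
  omega
end

section
/- Let G be a simple graph with matching number at most s, and let X be a set of exactly s vertices of G each of degree exceeding 2s. Then the complement V(G) ∖ X is an independent set in G, i.e. no edge of G has both endpoints outside X. -/
open SimpleGraph Set in

lemma aux_matching {V : Type*} [Fintype V] (G : SimpleGraph V) (s : ℕ) (X : Set V)
    (hX : X.ncard = s) (hdeg : ∀ v ∈ X, 2 * s < (G.neighborSet v).ncard)
    {u v : V} (hu : u ∉ X) (hv : v ∉ X) (huv : G.Adj u v) :
    ∀ Y : Finset V, ↑Y ⊆ X → ∃ M : G.Subgraph, M.IsMatching ∧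
      M.verts ∩ X = ↑Y ∧ M.verts.ncard ≤ 2 * Y.card + 2 ∧
      M.edgeSet.ncard = Y.card + 1 := by
  classical
  intro Y
  induction Y using Finset.induction_on with
  | empty =>
    intro _
    refine ⟨G.subgraphOfAdj huv, Subgraph.IsMatching.subgraphOfAdj huv, ?_, ?_, ?_⟩
    · simp only [subgraphOfAdj_verts]
      ext a; simp only [Set.mem_inter_iff, Set.mem_insert_iff, Set.mem_singleton_iff,
        Finset.coe_empty, Set.mem_empty_iff_false, iff_false, not_and]
      rintro (rfl | rfl) <;> tauto
    · simp only [subgraphOfAdj_verts]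
      calc ({u, v} : Set V).ncard ≤ 2 := by
            simpa using Set.ncard_insert_le u {v}
        _ ≤ 2 * (∅ : Finset V).card + 2 := by simp
    · rw [G.edgeSet_subgraphOfAdj huv]; simp
  | @insert x Y' hx ih =>
    intro hsub
    have hY'sub : ↑Y' ⊆ X := by
      intro a ha; exact hsub (by simp [ha])
    have hxX : x ∈ X := hsub (by simp)
    obtain ⟨M, hM, hMX, hMcard, hMedge⟩ := ih hY'sub
    have hXfin : X.Finite := Set.toFinite X
    have hY'card : Y'.card ≤ s - 1 := by
      have h1 : insert x Y' ≤ hXfin.toFinset := by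
        intro a ha; simpa using hsub (by exact_mod_cast ha)
      have h2 := Finset.card_le_card h1
      rw [Finset.card_insert_of_notMem hx] at h2
      have h3 : hXfin.toFinset.card = s := by
        rw [← Set.ncard_eq_toFinset_card X hXfin]; exact hX
      omega
    have hs1 : 1 ≤ s := by
      have : (0:ℕ) < X.ncard := (Set.ncard_pos (Set.toFinite X)).mpr ⟨x, hxX⟩
      omega
    -- forbidden set bound
    have hunion : (M.verts ∪ X).ncard ≤ 2 * s + 1 := by
      have heq : M.verts ∪ X = M.verts ∪ (X \ M.verts) := Set.union_diff_self.symm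
      have hdisj : Disjoint M.verts (X \ M.verts) := Set.disjoint_sdiff_right
      have hXd : (X \ M.verts).ncard = s - Y'.card := by
        have hxd : X \ M.verts = X \ (M.verts ∩ X) := (Set.diff_inter_self_eq_diff).symm
        rw [hxd, hMX, Set.ncard_diff (by exact hY'sub), hX, Set.ncard_coe_finset]
      rw [heq, Set.ncard_union_eq hdisj (Set.toFinite _) (Set.toFinite _), hXd]
      omega
    have hforb : ((M.verts ∪ X) ∩ G.neighborSet x).ncard ≤ 2 * s := by
      have h1 : (M.verts ∪ X) ∩ G.neighborSet x ⊆ (M.verts ∪ X) \ {x} := by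
        rintro a ⟨ha1, ha2⟩
        refine ⟨ha1, ?_⟩
        simp only [Set.mem_singleton_iff]
        rintro rfl
        exact G.loopless.irrefl _ ha2
      have h2 : ((M.verts ∪ X) \ {x}).ncard = (M.verts ∪ X).ncard - 1 :=
        Set.ncard_diff_singleton_of_mem (Or.inr hxX)
      have := Set.ncard_le_ncard h1 (Set.toFinite _)
      omega
    -- pick a new partner w
    have : ¬ (G.neighborSet x ⊆ M.verts ∪ X) := by
      intro hss
      have : G.neighborSet x ⊆ (M.verts ∪ X) ∩ G.neighborSet x := fun a ha => ⟨hss ha, ha⟩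
      have := Set.ncard_le_ncard this (Set.toFinite _)
      have := hdeg x hxX
      omega
    obtain ⟨w, hwN, hwnot⟩ := Set.not_subset.mp this
    have hxw : G.Adj x w := hwN
    have hxM : x ∉ M.verts := by
      intro hxM
      have : x ∈ (↑Y' : Set V) := hMX ▸ ⟨hxM, hxX⟩
      exact hx (by exact_mod_cast this)
    have hwM : w ∉ M.verts := fun h => hwnot (Or.inl h)
    have hwX : w ∉ X := fun h => hwnot (Or.inr h)
    refine ⟨M ⊔ G.subgraphOfAdj hxw, ?_, ?_, ?_, ?_⟩
    · refine hM.sup (Subgraph.IsMatching.subgraphOfAdj hxw) ?_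
      rw [hM.support_eq_verts, support_subgraphOfAdj]
      rw [Set.disjoint_iff]
      rintro a ⟨ha1, (rfl | rfl)⟩
      exacts [hxM ha1, hwM ha1]
    · rw [Subgraph.verts_sup, subgraphOfAdj_verts, Set.union_inter_distrib_right, hMX]
      ext a
      simp only [Set.mem_union, Finset.coe_insert, Set.mem_insert_iff, Set.mem_inter_iff,
        Set.mem_singleton_iff, Finset.mem_coe]
      constructor
      · rintro (ha | ⟨(rfl | rfl), haX⟩)
        · exact Or.inr ha
        · exact Or.inl rfl
        · exact absurd haX hwX
      · rintro (rfl | ha)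
        · exact Or.inr ⟨Or.inl rfl, hxX⟩
        · exact Or.inl ha
    · rw [Subgraph.verts_sup, subgraphOfAdj_verts]
      have := Set.ncard_union_le M.verts ({x, w} : Set V)
      have h2 : ({x, w} : Set V).ncard ≤ 2 := by simpa using Set.ncard_insert_le x {w}
      rw [Finset.card_insert_of_notMem hx]
      omega
    · rw [Subgraph.edgeSet_sup, G.edgeSet_subgraphOfAdj hxw, Set.union_singleton]
      have hnot : s(x, w) ∉ M.edgeSet := by
        intro h
        exact hxM (M.edge_vert (Subgraph.mem_edgeSet.mp h))
      rw [Set.ncard_insert_of_notMem hnot (Set.toFinite _), hMedge,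
        Finset.card_insert_of_notMem hx]


/-- Let `G` be a simple graph with matching number at most `s`, and let `X` be a set of
exactly `s` vertices of `G` each of degree exceeding `2s`. Then the complement of `X` is an
independent set in `G`: no edge of `G` has both endpoints outside `X`. -/
theorem complement_of_high_degree_independent {V : Type*} [Fintype V] (G : SimpleGraph V)
    (s : ℕ) (hmatch : MatchingNumberLE G s) (X : Set V) (hX : X.ncard = s)
    (hdeg : ∀ v ∈ X, 2 * s < (G.neighborSet v).ncard) :
    ∀ u v : V, u ∉ X → v ∉ X → ¬ G.Adj u v := by
  classical
  intro u v hu hv huv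
  have hXfin : X.Finite := Set.toFinite X
  obtain ⟨M, hM, _, _, hMedge⟩ :=
    aux_matching G s X hX hdeg hu hv huv hXfin.toFinset (by rw [Set.Finite.coe_toFinset])
  have : hXfin.toFinset.card = s := by rw [← Set.ncard_eq_toFinset_card X hXfin]; exact hX
  have := hmatch M hM
  omega
end

section
/- Let G be a simple graph containing no clique on k+1 vertices, and let u and v be distinct non-adjacent vertices of G. Let G' be the graph obtained from G by replacing the neighborhood of u by that of v, i.e. G' has the same edges as G among vertices other than u, and u is adjacent in G' exactly to the neighbors of v in G. Then G' contains no clique on k+1 vertices. -/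
/-- Let `G` be a simple graph containing no clique on `k+1` vertices, and let `u` and `v` be
distinct non-adjacent vertices of `G`. Let `G'` be the graph obtained from `G` by replacing
the neighborhood of `u` by that of `v`: `G'` has the same edges as `G` among vertices other
than `u`, and `u` is adjacent in `G'` exactly to the neighbors of `v` in `G`. Then `G'`
contains no clique on `k+1` vertices. -/
theorem zykov_symmetrization_cliqueFree {V : Type*} (G G' : SimpleGraph V) (k : ℕ)
    (hG : G.CliqueFree (k + 1)) (u v : V) (huv : u ≠ v) (hnadj : ¬ G.Adj u v)
    (hsame : ∀ x y : V, x ≠ u → y ≠ u → (G'.Adj x y ↔ G.Adj x y))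
    (hrepl : ∀ y : V, G'.Adj u y ↔ G.Adj v y) :
    G'.CliqueFree (k + 1) := by
  classical
  intro s hs
  by_cases hu : u ∈ s
  · -- v ∉ s, otherwise G'.Adj u v gives G.Adj v v
    have hv : v ∉ s := by
      intro hv
      have := hs.1 hu hv huv
      rw [hrepl] at this
      exact (G.loopless.irrefl v) this
    refine hG (insert v (s.erase u)) ?_
    constructor
    · intro x hx y hy hxy
      simp only [Finset.coe_insert, Set.mem_insert_iff, Finset.coe_erase,
        Set.mem_diff, Set.mem_singleton_iff] at hx hy
      rcases hx with rfl | ⟨hxs, hxu⟩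
      · rcases hy with rfl | ⟨hys, hyu⟩
        · exact absurd rfl hxy
        · exact (hrepl y).mp (hs.1 hu hys (Ne.symm hyu))
      · rcases hy with rfl | ⟨hys, hyu⟩
        · exact ((hrepl x).mp (hs.1 hu hxs (Ne.symm hxu))).symm
        · exact (hsame x y hxu hyu).mp (hs.1 hxs hys hxy)
    · rw [Finset.card_insert_of_notMem (fun h => hv (Finset.mem_of_mem_erase h)),
        Finset.card_erase_of_mem hu, hs.2]
      omega
  · refine hG s ?_
    refine ⟨fun x hx y hy hxy => ?_, hs.2⟩
    exact (hsame x y (fun h => hu (h ▸ hx)) (fun h => hu (h ▸ hy))).mp (hs.1 hx hy hxy)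
end

section
/- Let n ≥ 2s+1 and k ≥ 2, and let G be a simple graph on n vertices with clique number at most k and matching number at most s having the maximum possible number of edges among all such graphs. Let B be a set of vertices of G such that every connected component of G−B has an odd number of vertices and |B| + Σ_i (|A_i|−1)/2 = s, where A_1,…,A_m are the components of G−B. Then the induced subgraph of G on B is a complete multipartite graph with at most k vertex classes. -/
section Aux
open SimpleGraph
variable {V : Type*}

lemma sym2_inf_mem [LinearOrder V] (e : Sym2 V) : e.inf ∈ e := by
  induction e using Sym2.ind with
  | _ a b =>
    rw [Sym2.inf_mk, Sym2.mem_iff]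
    rcases le_total a b with h | h
    · exact Or.inl (inf_eq_left.mpr h)
    · exact Or.inr (inf_eq_right.mpr h)

lemma sym2_sup_mem [LinearOrder V] (e : Sym2 V) : e.sup ∈ e := by
  induction e using Sym2.ind with
  | _ a b =>
    rw [Sym2.sup_mk, Sym2.mem_iff]
    rcases le_total a b with h | h
    · exact Or.inr (sup_eq_right.mpr h)
    · exact Or.inl (sup_eq_left.mpr h)

lemma matching_edge_unique {G : SimpleGraph V} {M : G.Subgraph} (hM : M.IsMatching)
    {e f : Sym2 V} (he : e ∈ M.edgeSet) (hf : f ∈ M.edgeSet) {v : V}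
    (hve : v ∈ e) (hvf : v ∈ f) : e = f := by
  rw [← Sym2.other_spec hve] at he ⊢
  rw [← Sym2.other_spec hvf] at hf ⊢
  rw [SimpleGraph.Subgraph.mem_edgeSet] at he hf
  obtain ⟨w, -, hw⟩ := hM (M.edge_vert he)
  rw [hw _ he, hw _ hf]

lemma sym2_inf_ne_sup [LinearOrder V] {G : SimpleGraph V} {M : G.Subgraph}
    {e : Sym2 V} (he : e ∈ M.edgeSet) : e.inf ≠ e.sup := by
  induction e using Sym2.ind with
  | _ a b =>
    have hab : a ≠ b := (M.adj_sub (SimpleGraph.Subgraph.mem_edgeSet.mp he)).ne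
    rw [Sym2.inf_mk, Sym2.sup_mk]
    rcases lt_or_gt_of_ne hab with h | h
    · exact ne_of_lt (by simpa [inf_eq_left.mpr h.le, sup_eq_right.mpr h.le] using h)
    · exact ne_of_lt (by simpa [inf_eq_right.mpr h.le, sup_eq_left.mpr h.le] using h)

lemma matching_edges_in_set [LinearOrder V] {G : SimpleGraph V} {M : G.Subgraph}
    (hM : M.IsMatching) (S : Set V) (hS : S.Finite) :
    2 * {e | e ∈ M.edgeSet ∧ ∀ v ∈ e, v ∈ S}.ncard ≤ S.ncard := by
  set E : Set (Sym2 V) := {e | e ∈ M.edgeSet ∧ ∀ v ∈ e, v ∈ S} with hE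
  have hEfin : E.Finite := by
    have hfin2 : ((fun p : V × V => s(p.1, p.2)) '' (S ×ˢ S) : Set (Sym2 V)).Finite :=
      (hS.prod hS).image _
    apply hfin2.subset
    rintro e ⟨-, hmem⟩
    induction e using Sym2.ind with
    | _ a b => exact ⟨(a, b), ⟨hmem a (by simp), hmem b (by simp)⟩, rfl⟩
  have hinjInf : Set.InjOn Sym2.inf E := fun e he f hf h =>
    matching_edge_unique hM he.1 hf.1 (sym2_inf_mem e) (h ▸ sym2_inf_mem f)
  have hinjSup : Set.InjOn Sym2.sup E := fun e he f hf h =>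
    matching_edge_unique hM he.1 hf.1 (sym2_sup_mem e) (h ▸ sym2_sup_mem f)
  have hdisj : Disjoint (Sym2.inf '' E) (Sym2.sup '' E) := by
    rw [Set.disjoint_left]
    rintro v ⟨e, he, rfl⟩ ⟨f, hf, hv⟩
    have hef : e = f := matching_edge_unique hM he.1 hf.1 (sym2_inf_mem e) (hv ▸ sym2_sup_mem f)
    exact sym2_inf_ne_sup he.1 (hef ▸ hv.symm)
  have hsub : Sym2.inf '' E ∪ Sym2.sup '' E ⊆ S := by
    rintro v (⟨e, he, rfl⟩ | ⟨e, he, rfl⟩)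
    · exact he.2 _ (sym2_inf_mem e)
    · exact he.2 _ (sym2_sup_mem e)
  calc 2 * E.ncard = (Sym2.inf '' E).ncard + (Sym2.sup '' E).ncard := by
        rw [Set.ncard_image_of_injOn hinjInf, Set.ncard_image_of_injOn hinjSup]; ring
    _ = (Sym2.inf '' E ∪ Sym2.sup '' E).ncard :=
        (Set.ncard_union_eq hdisj (hEfin.image _) (hEfin.image _)).symm
    _ ≤ S.ncard := Set.ncard_le_ncard hsub hS

lemma ncard_iUnion_le {α ι : Type*} [Fintype ι] (f : ι → Set α) (hf : ∀ i, (f i).Finite) :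
    (⋃ i, f i).ncard ≤ ∑ i, (f i).ncard := by
  classical
  have : (⋃ i, f i) = ↑(Finset.univ.biUnion fun i => (hf i).toFinset) := by
    ext x; simp [Set.Finite.mem_toFinset]
  rw [this, Set.ncard_coe_finset]
  refine (Finset.card_biUnion_le).trans (le_of_eq ?_)
  refine Finset.sum_congr rfl fun i _ => ?_
  rw [Set.ncard_eq_toFinset_card _ (hf i)]

end Aux


open SimpleGraph Finset in
lemma matching_bound {V : Type*} [Fintype V] [LinearOrder V] [Nonempty V]
    (H : SimpleGraph V) (B : Set V)
    (hodd : ∀ c : (H.induce Bᶜ).ConnectedComponent, Odd c.supp.ncard)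
    (M : H.Subgraph) (hM : M.IsMatching) :
    M.edgeSet.ncard ≤ B.ncard + ∑ᶠ c : (H.induce Bᶜ).ConnectedComponent, (c.supp.ncard - 1) / 2 := by
  classical
  haveI : Fintype (H.induce Bᶜ).ConnectedComponent := Fintype.ofFinite _
  rw [finsum_eq_sum_of_fintype]
  set EB : Set (Sym2 V) := {e | e ∈ M.edgeSet ∧ ∃ v ∈ e, v ∈ B} with hEB
  set EC : (H.induce Bᶜ).ConnectedComponent → Set (Sym2 V) :=
    fun c => {e | e ∈ M.edgeSet ∧ ∀ v ∈ e, v ∈ Subtype.val '' c.supp} with hEC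
  have hfinE : ∀ c, (EC c).Finite := fun c => Set.toFinite _
  -- decomposition
  have hsub : M.edgeSet ⊆ EB ∪ ⋃ c, EC c := by
    intro e
    induction e using Sym2.ind with
    | _ a b =>
      intro he
      by_cases hB : ∃ v ∈ s(a, b), v ∈ B
      · exact Or.inl ⟨he, hB⟩
      · push_neg at hB
        have ha : a ∈ Bᶜ := hB a (by simp)
        have hb : b ∈ Bᶜ := hB b (by simp)
        have hadj : (H.induce Bᶜ).Adj ⟨a, ha⟩ ⟨b, hb⟩ := by
          simp only [comap_adj, Function.Embedding.coe_subtype]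
          exact M.adj_sub (SimpleGraph.Subgraph.mem_edgeSet.mp he)
        refine Or.inr (Set.mem_iUnion.mpr ⟨(H.induce Bᶜ).connectedComponentMk ⟨a, ha⟩, he, ?_⟩)
        intro v hv
        rw [Sym2.mem_iff] at hv
        rcases hv with rfl | rfl
        · exact ⟨⟨v, ha⟩, by rw [ConnectedComponent.mem_supp_iff], rfl⟩
        · exact ⟨⟨v, hb⟩, by
            rw [ConnectedComponent.mem_supp_iff]
            exact (ConnectedComponent.sound hadj.reachable).symm, rfl⟩
  -- bound on EB
  have hEBcard : EB.ncard ≤ B.ncard := by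
    set f : Sym2 V → V := fun e =>
      if h : ∃ v ∈ e, v ∈ B then h.choose else Classical.arbitrary V with hf
    refine Set.ncard_le_ncard_of_injOn f (fun e he => ?_) (fun e he e' he' hee' => ?_) B.toFinite
    · rw [hf]; dsimp only; rw [dif_pos he.2]; exact he.2.choose_spec.2
    · have h1 : f e ∈ e := by rw [hf]; dsimp only; rw [dif_pos he.2]; exact he.2.choose_spec.1
      have h2 : f e' ∈ e' := by rw [hf]; dsimp only; rw [dif_pos he'.2]; exact he'.2.choose_spec.1
      exact matching_edge_unique hM he.1 he'.1 h1 (hee' ▸ h2)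
  -- bound on each EC
  have hECcard : ∀ c, (EC c).ncard ≤ (c.supp.ncard - 1) / 2 := by
    intro c
    have h2 : 2 * (EC c).ncard ≤ c.supp.ncard := by
      have h2 := matching_edges_in_set hM (Subtype.val '' c.supp) (Set.toFinite _)
      rw [Set.ncard_image_of_injective _ Subtype.val_injective] at h2
      exact h2
    obtain ⟨m, hm⟩ := hodd c
    omega
  calc M.edgeSet.ncard ≤ (EB ∪ ⋃ c, EC c).ncard :=
        Set.ncard_le_ncard hsub (Set.toFinite _)
    _ ≤ EB.ncard + (⋃ c, EC c).ncard := Set.ncard_union_le _ _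
    _ ≤ B.ncard + ∑ c : (H.induce Bᶜ).ConnectedComponent, (EC c).ncard := by
        have := ncard_iUnion_le EC hfinE
        omega
    _ ≤ B.ncard + ∑ c : (H.induce Bᶜ).ConnectedComponent, (c.supp.ncard - 1) / 2 := by
        have := Finset.sum_le_sum (fun c (_ : c ∈ Finset.univ) => hECcard c)
        omega

open SimpleGraph Finset in
lemma ncard_edgeSet_eq {V : Type*} [Fintype V] (G : SimpleGraph V) [DecidableRel G.Adj] :
    G.edgeSet.ncard = G.edgeFinset.card := by
  rw [Set.ncard_eq_toFinset_card' G.edgeSet, Set.toFinset_card]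
  convert (G.edgeFinset_card).symm


open SimpleGraph Finset in
/-- Let `n ≥ 2s+1`, `k ≥ 2`, and let `G` be a simple graph on `n` vertices with clique number
at most `k` and matching number at most `s` having the maximum possible number of edges among
all such graphs. Let `B` be a set of vertices such that every connected component of `G - B`
has an odd number of vertices and `|B| + Σᵢ (|Aᵢ| - 1)/2 = s`, the sum ranging over the
connected components of `G - B`. Then the induced subgraph of `G` on `B` is a complete
multipartite graph with at most `k` vertex classes: there is a map `f : B → Fin k` such that
two vertices of `B` are adjacent in `G` if and only if their values under `f` differ. -/
theorem induced_on_B_complete_multipartite (n s k : ℕ) (hn : 2 * s + 1 ≤ n) (hk : 2 ≤ k)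
    (G : SimpleGraph (Fin n)) (hclique : G.CliqueFree (k + 1)) (hmatch : MatchingNumberLE G s)
    (hmax : ∀ G' : SimpleGraph (Fin n), G'.CliqueFree (k + 1) → MatchingNumberLE G' s →
      G'.edgeSet.ncard ≤ G.edgeSet.ncard)
    (B : Set (Fin n))
    (hodd : ∀ c : (G.induce Bᶜ).ConnectedComponent, Odd c.supp.ncard)
    (hsum : B.ncard + ∑ᶠ c : (G.induce Bᶜ).ConnectedComponent, (c.supp.ncard - 1) / 2 = s) :
    ∃ f : B → Fin k, ∀ x y : B, G.Adj x y ↔ f x ≠ f y := by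
  classical
  haveI : Nonempty (Fin n) := ⟨⟨0, by omega⟩⟩
  letI : DecidableRel G.Adj := Classical.decRel _
  -- maximality for graphs agreeing with G outside B
  have key : ∀ (H : SimpleGraph (Fin n)) [inst : DecidableRel H.Adj], H.CliqueFree (k + 1) →
      (∀ a b : Fin n, a ∈ Bᶜ → b ∈ Bᶜ → (H.Adj a b ↔ G.Adj a b)) →
      H.edgeFinset.card ≤ G.edgeFinset.card := by
    intro H _ hcf hpres
    have hind : H.induce Bᶜ = G.induce Bᶜ := by
      ext ⟨a, ha⟩ ⟨b, hb⟩
      simp only [comap_adj, Function.Embedding.coe_subtype]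
      exact hpres a b ha hb
    have hml : MatchingNumberLE H s := by
      intro M hMatch
      have hodd' : ∀ c : (H.induce Bᶜ).ConnectedComponent, Odd c.supp.ncard := by
        rw [hind]; exact hodd
      have hsum' : B.ncard + ∑ᶠ c : (H.induce Bᶜ).ConnectedComponent,
          (c.supp.ncard - 1) / 2 = s := by rw [hind]; exact hsum
      exact (matching_bound H B hodd' M hMatch).trans (le_of_eq hsum')
    have := hmax H hcf hml
    rwa [ncard_edgeSet_eq, ncard_edgeSet_eq] at this
  -- degree comparison
  have step : ∀ x y : Fin n, x ∈ B → y ∈ B → ¬G.Adj x y → G.degree x ≤ G.degree y := by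
    intro x y hx hy hnadj
    by_contra hlt
    push_neg at hlt
    have hcf := hclique.replaceVertex x y
    have hcard := G.card_edgeFinset_replaceVertex_of_not_adj hnadj
    have hpres : ∀ a b : Fin n, a ∈ Bᶜ → b ∈ Bᶜ →
        ((G.replaceVertex x y).Adj a b ↔ G.Adj a b) := by
      intro a b ha hb
      exact G.adj_replaceVertex_iff_of_ne x (fun h => ha (h ▸ hy)) (fun h => hb (h ▸ hy))
    have hky := key _ hcf hpres
    omega
  have deg_eq : ∀ x y : Fin n, x ∈ B → y ∈ B → ¬G.Adj x y → G.degree x = G.degree y :=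
    fun x y hx hy hnadj =>
      le_antisymm (step x y hx hy hnadj) (step y x hy hx (fun h => hnadj h.symm))
  -- transitivity of non-adjacency within B
  have trans : ∀ t s u : Fin n, t ∈ B → s ∈ B → u ∈ B →
      ¬G.Adj t s → ¬G.Adj s u → ¬G.Adj t u := by
    intro t s u ht hs hu hts hsu h
    have hst : ¬G.Adj s t := fun a => hts a.symm
    have dst := deg_eq s t hs ht hst
    have dsu := deg_eq s u hs hu hsu
    have nst : s ≠ t := fun a => hsu (a ▸ h)
    have ntu : t ≠ u := G.ne_of_adj h
    have hG1su : ¬(G.replaceVertex s t).Adj s u :=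
      (G.adj_replaceVertex_iff_of_ne s nst ntu.symm).not.mpr hsu
    have hcard1 := G.card_edgeFinset_replaceVertex_of_not_adj hst
    have hcard2 := (G.replaceVertex s t).card_edgeFinset_replaceVertex_of_not_adj hG1su
    have l1 : (G.replaceVertex s t).degree s = G.degree s := by
      unfold degree; congr 1; ext v
      simp only [mem_neighborFinset, SimpleGraph.irrefl, ite_self]
      by_cases eq : v = t
      · simpa only [eq, not_adj_replaceVertex_same, false_iff]
      · rw [G.adj_replaceVertex_iff_of_ne s nst eq]
    have l2 : (G.replaceVertex s t).degree u = G.degree u - 1 := by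
      rw [degree, degree, ← card_singleton t, ← card_sdiff_of_subset (by simp [h.symm])]
      congr 1; ext v
      simp only [mem_neighborFinset, mem_sdiff, mem_singleton]
      simp only [SimpleGraph.replaceVertex]
      split_ifs <;> simp_all [adj_comm]
    have l3 : 0 < G.degree u := by rw [G.degree_pos_iff_exists_adj u]; exact ⟨t, h.symm⟩
    have hcf := (hclique.replaceVertex s t).replaceVertex s u
    have hpres : ∀ a b : Fin n, a ∈ Bᶜ → b ∈ Bᶜ →
        (((G.replaceVertex s t).replaceVertex s u).Adj a b ↔ G.Adj a b) := by
      intro a b ha hb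
      rw [(G.replaceVertex s t).adj_replaceVertex_iff_of_ne s
          (fun hh => ha (by rw [hh]; exact hu)) (fun hh => hb (by rw [hh]; exact hu)),
        G.adj_replaceVertex_iff_of_ne s (fun hh => ha (by rw [hh]; exact ht))
          (fun hh => hb (by rw [hh]; exact ht))]
    have hky := key _ hcf hpres
    omega
  -- setoid on B
  let sd : Setoid ↥B := ⟨fun x y => ¬G.Adj x.val y.val,
    ⟨fun x => G.loopless.irrefl _, fun {x y} h a => h a.symm,
     fun {x y z} hxy hyz => trans x.val y.val z.val x.2 y.2 z.2 hxy hyz⟩⟩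
  haveI : Fintype (Quotient sd) := Fintype.ofFinite _
  have hcard : Fintype.card (Quotient sd) ≤ k := by
    by_contra hgt
    push_neg at hgt
    have hle : Fintype.card (Fin (k + 1)) ≤ Fintype.card (Quotient sd) := by
      simpa using hgt
    obtain ⟨emb⟩ := Function.Embedding.nonempty_of_card_le hle
    refine (cliqueFree_iff.mp hclique).elim' ?_
    refine ⟨⟨fun i => ((emb i).out : ↥B).val, ?_⟩, ?_⟩
    · intro i j hij
      by_contra hnadj
      have hr : sd.r (emb i).out (emb j).out := hnadj
      have : emb i = emb j := by
        rw [← Quotient.out_eq (emb i), ← Quotient.out_eq (emb j)]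
        exact Quotient.sound hr
      exact hij (emb.injective this)
    · intro i j hij
      have : (emb i).out = (emb j).out := Subtype.val_injective hij
      have : emb i = emb j := by
        rw [← Quotient.out_eq (emb i), ← Quotient.out_eq (emb j), this]
      exact emb.injective this
  obtain ⟨emb⟩ := Function.Embedding.nonempty_of_card_le
    (by simpa using hcard : Fintype.card (Quotient sd) ≤ Fintype.card (Fin k))
  refine ⟨fun x => emb (Quotient.mk sd x), fun x y => ?_⟩
  constructor
  · intro hadj hfeq
    have : Quotient.mk sd x = Quotient.mk sd y := emb.injective hfeq
    exact (Quotient.exact this) hadj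
  · intro hne
    by_contra hnadj
    exact hne (congrArg emb (Quotient.sound (hnadj : sd.r x y)))
end

section
/- Let n ≥ 2s+1, k ≥ 2, and 0 ≤ b ≤ s. Let G be a simple graph on n vertices with clique number at most k, and suppose there is a set B of b vertices such that G−B has one connected component A_1 of size 2s−2b+1 and all other components of G−B are single vertices. Then the number of edges of G is at most f(b) = t(2s−b+1, k) + b·(n−2s+b−1). -/
open SimpleGraph Finset

lemma aux_turan {W : Type*} [Fintype W] {k : ℕ} (hk : 0 < k) (H : SimpleGraph W)
    (h : H.CliqueFree (k+1)) : H.edgeSet.ncard ≤ turanNum (Fintype.card W) k := by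
  classical
  set m := Fintype.card W with hm
  let e : Fin m ≃ W := (Fintype.equivFin W).symm
  let H' : SimpleGraph (Fin m) := H.comap e.toEmbedding
  have iso : H' ≃g H := Iso.comap e H
  have cf : H'.CliqueFree (k+1) := h.comap ⟨iso.toEmbedding.toCopy⟩
  have hle := (isTuranMaximal_turanGraph (n := m) hk).2 cf
  rw [turanNum, Set.ncard_eq_toFinset_card', Set.ncard_eq_toFinset_card']
  calc (H.edgeSet.toFinset).card = H.edgeFinset.card := rfl
    _ = H'.edgeFinset.card := (iso.card_edgeFinset_eq).symm
    _ ≤ _ := hle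

/-- Let `n ≥ 2s+1`, `k ≥ 2`, and `0 ≤ b ≤ s`. Let `G` be a simple graph on `n` vertices with
clique number at most `k`, and suppose there is a set `B` of `b` vertices such that `G - B`
has one connected component of size `2s - 2b + 1` and all other components of `G - B` are
single vertices. Then the number of edges of `G` is at most
`f(b) = t(2s-b+1, k) + b·(n-2s+b-1)`. -/
theorem edge_bound_given_structure (n s k b : ℕ) (hn : 2 * s + 1 ≤ n) (hk : 2 ≤ k)
    (hb : b ≤ s) (G : SimpleGraph (Fin n)) (hclique : G.CliqueFree (k + 1))
    (B : Set (Fin n)) (hB : B.ncard = b)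
    (hstruct : ∃ c₀ : (G.induce Bᶜ).ConnectedComponent,
      c₀.supp.ncard = 2 * s - 2 * b + 1 ∧
      ∀ c : (G.induce Bᶜ).ConnectedComponent, c ≠ c₀ → c.supp.ncard = 1) :
    G.edgeSet.ncard ≤ turanNum (2 * s - b + 1) k + b * (n - 2 * s + b - 1) := by
  classical
  obtain ⟨c₀, hc₀, hother⟩ := hstruct
  set C : Set (Fin n) := Subtype.val '' c₀.supp with hCdef
  have hCB : C ⊆ Bᶜ := by rintro x ⟨y, _, rfl⟩; exact y.2
  set A : Set (Fin n) := B ∪ C with hAdef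
  have hBA : B ⊆ A := Set.subset_union_left
  have hCcard : C.ncard = 2 * s - 2 * b + 1 := by
    rw [hCdef, Set.ncard_image_of_injective _ Subtype.val_injective, hc₀]
  have hAcard : A.ncard = 2 * s - b + 1 := by
    rw [hAdef, Set.ncard_union_eq
      (Set.disjoint_left.2 fun x hxB hxC => (hCB hxC) hxB) (Set.toFinite _) (Set.toFinite _),
      hB, hCcard]
    omega
  -- key structural fact
  have key : ∀ u v : Fin n, G.Adj u v → u ∉ A → v ∈ B := by
    intro u v huv huA
    by_contra hvB
    have huB : u ∉ B := fun h => huA (hBA h)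
    have hadj : (G.induce Bᶜ).Adj ⟨u, huB⟩ ⟨v, hvB⟩ := huv
    have hcomp : (G.induce Bᶜ).connectedComponentMk ⟨u, huB⟩ =
        (G.induce Bᶜ).connectedComponentMk ⟨v, hvB⟩ :=
      ConnectedComponent.sound hadj.reachable
    by_cases hc : (G.induce Bᶜ).connectedComponentMk ⟨u, huB⟩ = c₀
    · exact huA (Or.inr ⟨⟨u, huB⟩, (ConnectedComponent.mem_supp_iff _ _).2 hc, rfl⟩)
    · have h1 := hother _ hc
      rw [Set.ncard_eq_one] at h1
      obtain ⟨a, ha⟩ := h1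
      have hu : (⟨u, huB⟩ : ↥Bᶜ) ∈ ((G.induce Bᶜ).connectedComponentMk ⟨u, huB⟩).supp :=
        (ConnectedComponent.mem_supp_iff _ _).2 rfl
      have hv : (⟨v, hvB⟩ : ↥Bᶜ) ∈ ((G.induce Bᶜ).connectedComponentMk ⟨u, huB⟩).supp :=
        (ConnectedComponent.mem_supp_iff _ _).2 hcomp.symm
      rw [ha] at hu hv
      exact huv.ne (Subtype.mk_eq_mk.1 ((Set.mem_singleton_iff.1 hu).trans
        (Set.mem_singleton_iff.1 hv).symm))
  -- edge partition
  set E : Finset (Sym2 (Fin n)) := G.edgeFinset with hE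
  set p : Sym2 (Fin n) → Prop := fun e => ∀ x ∈ e, x ∈ A with hp
  have hsplit : (E.filter p).card + (E.filter fun e => ¬ p e).card = E.card :=
    Finset.card_filter_add_card_filter_not _
  -- A is nonempty
  have hAne : A.Nonempty := by
    rcases Set.nonempty_of_ncard_ne_zero (s := C) (by omega) with ⟨x, hx⟩
    exact ⟨x, Or.inr hx⟩
  obtain ⟨a₀, ha₀⟩ := hAne
  -- bound on E₁
  have hE1 : (E.filter p).card ≤ turanNum (2 * s - b + 1) k := by
    have hcardA : Fintype.card ↥A = 2 * s - b + 1 := by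
      rw [← hAcard, Set.ncard_eq_toFinset_card', Set.toFinset_card]
    have hcf : (G.induce A).CliqueFree (k + 1) := hclique.comap ⟨(Embedding.induce A).toCopy⟩
    have hturan := aux_turan (k := k) (by omega) (G.induce A) hcf
    rw [hcardA] at hturan
    refine le_trans ?_ hturan
    rw [Set.ncard_eq_toFinset_card']
    set j : Fin n → ↥A := fun x => if h : x ∈ A then ⟨x, h⟩ else ⟨a₀, ha₀⟩ with hj
    apply Finset.card_le_card_of_injOn (fun e => Sym2.map j e)
    · intro e he
      simp only [Finset.mem_coe, Finset.mem_filter, hE, mem_edgeFinset] at he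
      obtain ⟨he1, he2⟩ := he
      induction e with
      | _ u v =>
        have hu : u ∈ A := he2 u (Sym2.mem_mk_left _ _)
        have hv : v ∈ A := he2 v (Sym2.mem_mk_right _ _)
        rw [Finset.mem_coe, Set.mem_toFinset]
        simp only [Sym2.map_pair_eq, mem_edgeSet]
        show G.Adj ↑(j u) ↑(j v)
        rw [hj]; simp only [hu, hv, dif_pos]
        exact he1
    · intro e he e' he' hee
      simp only [Finset.coe_filter, Set.mem_setOf_eq] at he he'
      have recov : ∀ f ∈ E.filter p, Sym2.map (Subtype.val ∘ j) f = f := by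
        intro f hf
        simp only [Finset.mem_filter] at hf
        have : ∀ x ∈ f, (Subtype.val ∘ j) x = id x := by
          intro x hx
          have hxA : x ∈ A := hf.2 x hx
          simp [hj, hxA]
        rw [Sym2.map_congr this, Sym2.map_id]; rfl
      have h1 := recov e (Finset.mem_filter.2 he)
      have h2 := recov e' (Finset.mem_filter.2 he')
      dsimp only at hee
      rw [← h1, ← h2, ← Sym2.map_map, ← Sym2.map_map, hee]
  -- bound on E₂
  have hScard : (Aᶜ : Set (Fin n)).ncard = n - 2 * s + b - 1 := by
    have := Set.ncard_add_ncard_compl A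
    rw [hAcard, Nat.card_eq_fintype_card, Fintype.card_fin] at this
    omega
  have hE2 : (E.filter fun e => ¬ p e).card ≤ b * (n - 2 * s + b - 1) := by
    have : (B.toFinset ×ˢ (Aᶜ : Set (Fin n)).toFinset).card = b * (n - 2 * s + b - 1) := by
      rw [Finset.card_product, ← Set.ncard_eq_toFinset_card', ← Set.ncard_eq_toFinset_card',
        hB, hScard]
    rw [← this]
    set g : Sym2 (Fin n) → Fin n × Fin n :=
      fun e => if (Quot.out e).1 ∈ B then Quot.out e else ((Quot.out e).2, (Quot.out e).1)
      with hg
    apply Finset.card_le_card_of_injOn g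
    · intro e he
      simp only [Finset.mem_coe, Finset.mem_filter, hE, mem_edgeFinset, hp] at he
      obtain ⟨he1, he2⟩ := he
      rcases hq : Quot.out e with ⟨u, v⟩
      have heq : e = s(u, v) := by rw [← Quot.out_eq e, hq]
      have hadj : G.Adj u v := by rwa [heq, mem_edgeSet] at he1
      push_neg at he2
      obtain ⟨x, hxe, hxA⟩ := he2
      rw [heq, Sym2.mem_iff] at hxe
      rw [Finset.mem_coe, Finset.mem_product, hg]
      dsimp only
      rw [hq]
      by_cases hub : u ∈ B
      · have hvA : v ∉ A := by
          rcases hxe with rfl | rfl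
          · exact absurd (hBA hub) hxA
          · exact hxA
        rw [if_pos hub]
        exact ⟨Set.mem_toFinset.2 hub, Set.mem_toFinset.2 hvA⟩
      · have huA : u ∉ A := by
          intro huA
          have hvA : v ∉ A := by
            rcases hxe with rfl | rfl
            · exact absurd huA hxA
            · exact hxA
          exact hub (key v u hadj.symm hvA)
        have hvB : v ∈ B := key u v hadj huA
        rw [if_neg hub]
        exact ⟨Set.mem_toFinset.2 hvB, Set.mem_toFinset.2 huA⟩
    · intro e he e' he' hee
      have h1 : Sym2.mk (g e).1 (g e).2 = e := by
        rw [hg]; dsimp only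
        split
        · exact Quot.out_eq e
        · rw [Sym2.eq_swap]; exact Quot.out_eq e
      have h2 : Sym2.mk (g e').1 (g e').2 = e' := by
        rw [hg]; dsimp only
        split
        · exact Quot.out_eq e'
        · rw [Sym2.eq_swap]; exact Quot.out_eq e'
      rw [← h1, ← h2, hee]
  -- conclude
  rw [show G.edgeSet.ncard = E.card from Set.ncard_eq_toFinset_card' _]
  omega
end
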